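/- arXiv:2006.08277 — 2 statements merged into one kernel-verified Lean document; each statement's English description precedes it below -/
import Mathlib

section
/- Let X be a Hausdorff space, φ : 2^ℕ → X continuous, E a binary relation on X, and suppose the pullback F = {(c, d) ∈ 2^ℕ × 2^ℕ : (φ(c), φ(d)) ∈ E} is disjoint from the digraph G₀ and is an equivalence relation with the Baire property. Then F is meager in 2^ℕ × 2^ℕ. -/
open Filter Topology

section KuratowskiUlam

open Set TopologicalSpace

variable {α β : Type*} [TopologicalSpace α] [TopologicalSpace β]

/-- For an open dense set in a product, the set of points whose section is dense is residual. -/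
lemma dense_section_residual' [SecondCountableTopology β] {W : Set (α × β)}
    (hWo : IsOpen W) (hWd : Dense W) :
    {x : α | Dense {y : β | (x, y) ∈ W}} ∈ residual α := by
  obtain ⟨b, hbc, hbne, hb⟩ := exists_countable_basis β
  have key : ∀ V ∈ b, {x : α | ∃ y ∈ V, (x, y) ∈ W} ∈ residual α := by
    intro V hV
    have hVo : IsOpen V := hb.isOpen hV
    have hVne : V.Nonempty := by
      rcases Set.eq_empty_or_nonempty V with h | h
      · exact absurd (h ▸ hV) hbne
      · exact h
    apply residual_of_dense_open
    · have : {x : α | ∃ y ∈ V, (x, y) ∈ W} = Prod.fst '' (W ∩ univ ×ˢ V) := by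
        ext x
        simp only [mem_setOf_eq, mem_image, mem_inter_iff, mem_prod, mem_univ, true_and,
          Prod.exists]
        constructor
        · rintro ⟨y, hyV, hyW⟩; exact ⟨x, y, ⟨hyW, hyV⟩, rfl⟩
        · rintro ⟨x', y, ⟨hyW, hyV⟩, rfl⟩; exact ⟨y, hyV, hyW⟩
      rw [this]
      exact isOpenMap_fst _ (hWo.inter (isOpen_univ.prod hVo))
    · rw [dense_iff_inter_open]
      intro O hOo hOne
      obtain ⟨p, hpW, hpOV⟩ := hWd.inter_open_nonempty _ (hOo.prod hVo) (hOne.prod hVne)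
      exact ⟨p.1, hpW.1, p.2, hpW.2, hpOV⟩
  have hmem := (countable_bInter_mem hbc).2 key
  refine mem_of_superset hmem ?_
  intro x hx
  simp only [mem_iInter, mem_setOf_eq] at hx
  show Dense {y : β | (x, y) ∈ W}
  rw [hb.dense_iff]
  intro V hV hVne
  obtain ⟨y, hyV, hyW⟩ := hx V hV
  exact ⟨y, hyV, hyW⟩

/-- Kuratowski–Ulam, residual form. -/
lemma ku_residual' [SecondCountableTopology β] {A : Set (α × β)}
    (hA : A ∈ residual (α × β)) :
    {x : α | {y : β | (x, y) ∈ A} ∈ residual β} ∈ residual α := by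
  rw [mem_residual_iff] at hA
  obtain ⟨S, hSo, hSd, hSc, hSsub⟩ := hA
  have key : ∀ W ∈ S, {x : α | Dense {y : β | (x, y) ∈ W}} ∈ residual α := fun W hW =>
    dense_section_residual' (hSo W hW) (hSd W hW)
  refine mem_of_superset ((countable_bInter_mem hSc).2 key) ?_
  intro x hx
  simp only [mem_iInter, mem_setOf_eq] at hx ⊢
  have h1 : (⋂ W ∈ S, {y : β | (x, y) ∈ W}) ∈ residual β :=
    (countable_bInter_mem hSc).2 fun W hW =>
      residual_of_dense_open ((hSo W hW).preimage (Continuous.prodMk_right x)) (hx W hW)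
  refine mem_of_superset h1 ?_
  intro y hy
  simp only [mem_iInter, mem_setOf_eq] at hy
  exact hSsub fun W hW => hy W hW

/-- Kuratowski–Ulam, meager form. -/
lemma ku_meagre' [SecondCountableTopology β] {M : Set (α × β)}
    (hM : IsMeagre M) :
    {x : α | IsMeagre {y : β | (x, y) ∈ M}} ∈ residual α := by
  have := ku_residual' (α := α) (β := β) (A := Mᶜ) hM
  refine mem_of_superset this ?_
  intro x hx
  simp only [mem_setOf_eq] at hx ⊢
  show {y : β | (x, y) ∈ M}ᶜ ∈ residual β
  have : {y : β | (x, y) ∈ M}ᶜ = {y : β | (x, y) ∈ Mᶜ} := by ext y; simp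
  rw [this]; exact hx

lemma not_isMeagre_of_isOpen' [BaireSpace α] {s : Set α} (hs : IsOpen s)
    (hne : s.Nonempty) : ¬ IsMeagre s := by
  intro h
  obtain ⟨x, hx⟩ := (dense_of_mem_residual h).inter_open_nonempty s hs hne
  exact hx.2 hx.1

end KuratowskiUlam

/-- Concatenation of a finite binary string with a point of Cantor space. -/
def cat01 (l : List Bool) (c : ℕ → Bool) : ℕ → Bool :=
  fun k => if h : k < l.length then l.get ⟨k, h⟩ else c (k - l.length)

/-- The digraph `G₀` on Cantor space determined by the sequence of strings `s`. -/
def G0 (s : ℕ → List Bool) : Set ((ℕ → Bool) × (ℕ → Bool)) :=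
  {p | ∃ n : ℕ, ∃ c : ℕ → Bool,
    p = (cat01 (s n ++ [false]) c, cat01 (s n ++ [true]) c)}

section Cantor

open Set

/-- The basic clopen set of extensions of a finite string. -/
def Ns (l : List Bool) : Set (ℕ → Bool) :=
  {x | ∀ i, (h : i < l.length) → x i = l.get ⟨i, h⟩}

lemma cat01_lt {l : List Bool} {c : ℕ → Bool} {k : ℕ} (h : k < l.length) :
    cat01 l c k = l.get ⟨k, h⟩ := by simp [cat01, h]

lemma cat01_ge {l : List Bool} {c : ℕ → Bool} {k : ℕ} (h : ¬ k < l.length) :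
    cat01 l c k = c (k - l.length) := by simp [cat01, h]

lemma continuous_cat01 (l : List Bool) : Continuous (cat01 l) := by
  apply continuous_pi
  intro k
  by_cases h : k < l.length
  · simp only [cat01, h, dif_pos]
    exact continuous_const
  · simp only [cat01, h, dif_neg, not_false_iff]
    exact continuous_apply _

lemma injective_cat01 (l : List Bool) : Function.Injective (cat01 l) := by
  intro c d hcd
  funext k
  have := congrFun hcd (k + l.length)
  rwa [cat01_ge (by omega), cat01_ge (by omega), Nat.add_sub_cancel] at this

lemma mem_Ns_cat01 (l : List Bool) (c : ℕ → Bool) : cat01 l c ∈ Ns l :=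
  fun _ h => cat01_lt h

lemma range_cat01 (l : List Bool) : Set.range (cat01 l) = Ns l := by
  apply Set.Subset.antisymm
  · rintro _ ⟨c, rfl⟩
    exact mem_Ns_cat01 l c
  · intro x hx
    refine ⟨fun k => x (k + l.length), funext fun k => ?_⟩
    by_cases h : k < l.length
    · rw [cat01_lt h, hx k h]
    · rw [cat01_ge h, Nat.sub_add_cancel (by omega)]

lemma isOpen_Ns (l : List Bool) : IsOpen (Ns l) := by
  have : Ns l = ⋂ (i : Fin l.length), {x : ℕ → Bool | x i = l.get i} := by
    ext x
    simp only [Set.mem_iInter, Set.mem_setOf_eq, Ns]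
    exact ⟨fun h i => h i i.2, fun h i hi => h ⟨i, hi⟩⟩
  rw [this]
  refine isOpen_iInter_of_finite fun i => ?_
  have : {x : ℕ → Bool | x i = l.get i} = (fun x : ℕ → Bool => x i) ⁻¹' {b | b = l.get i} := rfl
  rw [this]
  exact (continuous_apply (i : ℕ)).isOpen_preimage _ (isOpen_discrete _)

lemma Ns_anti {l₁ l₂ : List Bool} (h : l₁ <+: l₂) : Ns l₂ ⊆ Ns l₁ := by
  intro x hx i hi
  have hlen : l₁.length ≤ l₂.length := h.length_le
  have := hx i (lt_of_lt_of_le hi hlen)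
  rw [this]
  obtain ⟨t, rfl⟩ := h
  simp [List.getElem_append, hi]

lemma isOpenMap_cat01 (l : List Bool) : IsOpenMap (cat01 l) := by
  have hemb : IsOpenEmbedding (cat01 l) :=
    ⟨((continuous_cat01 l).isClosedEmbedding (injective_cat01 l)).toIsEmbedding,
      by rw [range_cat01]; exact isOpen_Ns l⟩
  exact hemb.isOpenMap

lemma cylinder_eq_Ns (y : ℕ → Bool) (m : ℕ) :
    PiNat.cylinder y m = Ns (List.ofFn fun i : Fin m => y i) := by
  ext x
  simp only [PiNat.mem_cylinder_iff, Ns, Set.mem_setOf_eq, List.length_ofFn]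
  constructor
  · intro h i hi; rw [h i hi]; simp [List.get_ofFn]
  · intro h i hi; rw [h i hi]; simp [List.get_ofFn]

end Cantor

/-- If the pullback of `E` through a continuous map into a Hausdorff space is an
equivalence relation with the Baire property disjoint from `G₀`, then it is meager. -/
theorem stmt_13 {X : Type*} [TopologicalSpace X] [T2Space X]
    (s : ℕ → List Bool)
    (hlen : ∀ n, (s n).length = n)
    (hdense : ∀ l : List Bool, ∃ n, l <+: s n)
    (φ : (ℕ → Bool) → X) (hφ : Continuous φ)
    (E : Set (X × X))
    (hdisj : ∀ c d : ℕ → Bool, (c, d) ∈ G0 s → (φ c, φ d) ∉ E)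
    (hEq : Equivalence (fun c d : ℕ → Bool => (φ c, φ d) ∈ E))
    (hBP : ∃ U : Set ((ℕ → Bool) × (ℕ → Bool)), IsOpen U ∧
      IsMeagre (symmDiff {p : (ℕ → Bool) × (ℕ → Bool) | (φ p.1, φ p.2) ∈ E} U)) :
    IsMeagre {p : (ℕ → Bool) × (ℕ → Bool) | (φ p.1, φ p.2) ∈ E} := by
  by_contra hmeag
  obtain ⟨U, hUo, hUm⟩ := hBP
  set F : Set ((ℕ → Bool) × (ℕ → Bool)) := {p | (φ p.1, φ p.2) ∈ E} with hFdef
  -- U \ F is meager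
  have hUF : IsMeagre (U \ F) :=
    hUm.mono fun p hp => Set.mem_symmDiff.2 (Or.inr ⟨hp.1, hp.2⟩)
  -- U is nonempty
  have hUne : U.Nonempty := by
    by_contra h
    rw [Set.not_nonempty_iff_eq_empty] at h
    apply hmeag
    refine hUm.mono fun p hp => Set.mem_symmDiff.2 (Or.inl ⟨hp, ?_⟩)
    simp [h]
  obtain ⟨p, hp⟩ := hUne
  -- find a basic box inside U
  have hbasis := (PiNat.isTopologicalBasis_cylinders (fun _ : ℕ => Bool)).prod
    (PiNat.isTopologicalBasis_cylinders (fun _ : ℕ => Bool))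
  obtain ⟨t, ht, hpt, htU⟩ := hbasis.exists_subset_of_mem_open hp hUo
  obtain ⟨t1, ⟨x, m, rfl⟩, t2, ⟨y, m', rfl⟩, rfl⟩ := ht
  -- F is comeager in the box
  have hM1 : IsMeagre ((PiNat.cylinder x m ×ˢ PiNat.cylinder y m') \ F) :=
    hUF.mono fun q hq => show q ∈ U \ F from ⟨htU hq.1, hq.2⟩
  -- Kuratowski-Ulam: find x₀ in the first cylinder with comeager section
  have hres := ku_meagre' hM1
  obtain ⟨x₀, hx₀C, hx₀⟩ := (dense_of_mem_residual hres).inter_open_nonempty _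
    (PiNat.isOpen_cylinder (fun _ : ℕ => Bool) x m) ⟨x, PiNat.self_mem_cylinder x m⟩
  have hx₀' : IsMeagre {d | (x₀, d) ∈ (PiNat.cylinder x m ×ˢ PiNat.cylinder y m') \ F} := hx₀
  set D : Set (ℕ → Bool) := {d | (φ x₀, φ d) ∈ E} with hDdef
  have hDm : IsMeagre (PiNat.cylinder y m' \ D) := by
    refine hx₀'.mono fun d hd => show (x₀, d) ∈ (PiNat.cylinder x m ×ˢ PiNat.cylinder y m') \ F from ⟨⟨hx₀C, hd.1⟩, hd.2⟩
  -- pass to the string b and then to s n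
  set b : List Bool := List.ofFn (fun i : Fin m' => y i) with hbdef
  obtain ⟨n, hbn⟩ := hdense b
  have hNb_eq : PiNat.cylinder y m' = Ns b := cylinder_eq_Ns y m'
  have hDm' : IsMeagre (Ns b \ D) := hNb_eq ▸ hDm
  set e₀ : (ℕ → Bool) → (ℕ → Bool) := cat01 (s n ++ [false]) with he₀def
  set e₁ : (ℕ → Bool) → (ℕ → Bool) := cat01 (s n ++ [true]) with he₁def
  have hsn_b : b <+: s n ++ [false] := hbn.trans (List.prefix_append _ _)
  have hsn_b' : b <+: s n ++ [true] := hbn.trans (List.prefix_append _ _)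
  have he₀Nb : ∀ c, e₀ c ∈ Ns b := fun c => Ns_anti hsn_b (mem_Ns_cat01 _ c)
  have he₁Nb : ∀ c, e₁ c ∈ Ns b := fun c => Ns_anti hsn_b' (mem_Ns_cat01 _ c)
  -- F is comeager in Ns b × Ns b
  have hM2 : IsMeagre ((Ns b ×ˢ Ns b) \ F) := by
    have h1 : IsMeagre ((Prod.fst : (ℕ → Bool) × (ℕ → Bool) → (ℕ → Bool)) ⁻¹' (Ns b \ D)) :=
      hDm'.preimage_of_isOpenMap continuous_fst isOpenMap_fst
    have h2 : IsMeagre ((Prod.snd : (ℕ → Bool) × (ℕ → Bool) → (ℕ → Bool)) ⁻¹' (Ns b \ D)) :=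
      hDm'.preimage_of_isOpenMap continuous_snd isOpenMap_snd
    have hu : IsMeagre ((Prod.fst ⁻¹' (Ns b \ D)) ∪ (Prod.snd ⁻¹' (Ns b \ D))) := by
      rw [IsMeagre, Set.compl_union]
      exact Filter.inter_mem h1 h2
    refine hu.mono fun q hq => ?_
    by_contra hq'
    simp only [Set.mem_union, Set.mem_preimage, Set.mem_diff, not_or, not_and, not_not] at hq'
    have hq1 : q.1 ∈ D := hq'.1 hq.1.1
    have hq2 : q.2 ∈ D := hq'.2 hq.1.2
    exact hq.2 (hEq.trans (hEq.symm hq1) hq2)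
  -- pull back via (e₀, id) and (e₁, id)
  have hT₀ : IsMeagre (Prod.map e₀ (id : (ℕ → Bool) → (ℕ → Bool)) ⁻¹' ((Ns b ×ˢ Ns b) \ F)) :=
    hM2.preimage_of_isOpenMap ((continuous_cat01 _).prodMap continuous_id)
      ((isOpenMap_cat01 _).prodMap IsOpenMap.id)
  have hT₁ : IsMeagre (Prod.map e₁ (id : (ℕ → Bool) → (ℕ → Bool)) ⁻¹' ((Ns b ×ˢ Ns b) \ F)) :=
    hM2.preimage_of_isOpenMap ((continuous_cat01 _).prodMap continuous_id)
      ((isOpenMap_cat01 _).prodMap IsOpenMap.id)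
  have hT : IsMeagre ((Prod.map e₀ id ⁻¹' ((Ns b ×ˢ Ns b) \ F)) ∪
      (Prod.map e₁ id ⁻¹' ((Ns b ×ˢ Ns b) \ F))) := by
    rw [IsMeagre, Set.compl_union]
    exact Filter.inter_mem hT₀ hT₁
  -- Kuratowski-Ulam again: find c with meager section
  have hres2 := ku_meagre' hT
  obtain ⟨c, hc⟩ := (dense_of_mem_residual hres2).nonempty
  have hc' : IsMeagre {d | (c, d) ∈ (Prod.map e₀ id ⁻¹' ((Ns b ×ˢ Ns b) \ F)) ∪
      (Prod.map e₁ id ⁻¹' ((Ns b ×ˢ Ns b) \ F))} := hc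
  -- Ns b is nonempty open, hence not meager, so there is z ∈ Ns b outside the section
  have hNbne : (Ns b).Nonempty := ⟨cat01 b (fun _ => false), mem_Ns_cat01 _ _⟩
  have hnotsub : ¬ (Ns b ⊆ {d | (c, d) ∈ (Prod.map e₀ id ⁻¹' ((Ns b ×ˢ Ns b) \ F)) ∪
      (Prod.map e₁ id ⁻¹' ((Ns b ×ˢ Ns b) \ F))}) := fun hsub =>
    not_isMeagre_of_isOpen' (isOpen_Ns b) hNbne (hc'.mono hsub)
  obtain ⟨z, hzNb, hzT⟩ := Set.not_subset.mp hnotsub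
  simp only [Set.mem_setOf_eq, Set.mem_union, Set.mem_preimage, not_or] at hzT
  have hz₀ : (e₀ c, z) ∈ F := by
    by_contra h
    exact hzT.1 ⟨⟨he₀Nb c, hzNb⟩, h⟩
  have hz₁ : (e₁ c, z) ∈ F := by
    by_contra h
    exact hzT.2 ⟨⟨he₁Nb c, hzNb⟩, h⟩
  exact hdisj (e₀ c) (e₁ c) ⟨n, c, rfl⟩ (hEq.trans hz₀ (hEq.symm hz₁))
end

section
/- Let (X, f) be a dynamical system on a complete metric space X with a dense subset of cardinality κ (an infinite cardinal). If X contains a scrambled set of cardinality strictly greater than κ, then X contains a scrambled Cantor set. -/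
open Filter Topology

/-- `x` and `y` are proximal under `f`. -/
def Proximal {X : Type*} [MetricSpace X] (f : X → X) (x y : X) : Prop :=
  Filter.liminf (fun n => edist (f^[n] x) (f^[n] y)) Filter.atTop = 0

/-- `x` and `y` are asymptotic under `f`. -/
def Asymptotic {X : Type*} [MetricSpace X] (f : X → X) (x y : X) : Prop :=
  Filter.limsup (fun n => edist (f^[n] x) (f^[n] y)) Filter.atTop = 0

/-- A set is scrambled if all pairs of distinct points in it are Li–Yorke. -/
def Scrambled {X : Type*} [MetricSpace X] (f : X → X) (Y : Set X) : Prop :=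
  ∀ x ∈ Y, ∀ y ∈ Y, x ≠ y → Proximal f x y ∧ ¬ Asymptotic f x y

open Filter Topology ENNReal Set Cardinal

set_option linter.unusedSectionVars false
set_option linter.unusedVariables false
set_option linter.unreachableTactic false
set_option linter.unusedTactic false
set_option maxHeartbeats 1000000

noncomputable section
universe u
variable {X : Type u} [MetricSpace X] {c : Cardinal.{u}}

/-- orbit limsup "pseudometric" -/
def LS (f : X → X) (x y : X) : ℝ≥0∞ :=
  Filter.limsup (fun n => edist (f^[n] x) (f^[n] y)) Filter.atTop

lemma LS_comm (f : X → X) (x y : X) : LS f x y = LS f y x := by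
  unfold LS; simp [edist_comm]

lemma LS_self (f : X → X) (x : X) : LS f x x = 0 := by
  unfold LS; simp [edist_self]

lemma ennreal_limsup_add_le (u v : ℕ → ℝ≥0∞) :
    Filter.limsup (fun n => u n + v n) Filter.atTop ≤
      Filter.limsup u Filter.atTop + Filter.limsup v Filter.atTop := by
  set U := Filter.limsup u Filter.atTop
  set V := Filter.limsup v Filter.atTop
  rcases eq_or_ne U ⊤ with hU | hU
  · simp [hU]
  rcases eq_or_ne V ⊤ with hV | hV
  · simp [hV]
  refine ENNReal.le_of_forall_pos_le_add fun ε hε hfin => ?_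
  have h2 : (0:ℝ≥0∞) < ε / 2 := by
    simp [ENNReal.div_pos_iff, hε.ne']
  have hu : ∀ᶠ n in atTop, u n < U + ε/2 :=
    eventually_lt_of_limsup_lt (by exact ENNReal.lt_add_right hU h2.ne')
  have hv : ∀ᶠ n in atTop, v n < V + ε/2 :=
    eventually_lt_of_limsup_lt (by exact ENNReal.lt_add_right hV h2.ne')
  have : ∀ᶠ n in atTop, u n + v n ≤ (U + V) + ε := by
    filter_upwards [hu, hv] with n h1 h2'
    calc u n + v n ≤ (U + ε/2) + (V + ε/2) := add_le_add h1.le h2'.le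
    _ = (U + V) + (ε/2 + ε/2) := by ring
    _ = (U + V) + ε := by rw [ENNReal.add_halves]
  exact limsup_le_of_le (by isBoundedDefault) this

lemma LS_triangle (f : X → X) (x y z : X) : LS f x z ≤ LS f x y + LS f y z := by
  refine le_trans ?_ (ennreal_limsup_add_le _ _)
  exact Filter.limsup_le_limsup (Filter.Eventually.of_forall fun n => edist_triangle _ _ _)

lemma big_nonempty {W : Set X} (h : c < Cardinal.mk W) : W.Nonempty := by
  rcases W.eq_empty_or_nonempty with rfl | h'
  · simp at h
  · exact h'

lemma big_pigeon (hc : ℵ₀ ≤ c) {ι : Type u} (A : ι → Set X) (hι : Cardinal.mk ι ≤ c)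
    (h : c < Cardinal.mk (⋃ i, A i : Set X)) : ∃ i, c < Cardinal.mk (A i) := by
  by_contra hall
  push_neg at hall
  have : Cardinal.mk (⋃ i, A i : Set X) ≤ c := by
    refine le_trans (Cardinal.mk_iUnion_le A) ?_
    calc Cardinal.mk ι * ⨆ i, Cardinal.mk (A i) ≤ c * c :=
      mul_le_mul' hι (ciSup_le' hall)
    _ = c := Cardinal.mul_eq_self hc
  exact absurd (h.trans_le this) (lt_irrefl c)

lemma big_diff (hc : ℵ₀ ≤ c) {W S : Set X} (hW : c < Cardinal.mk W)
    (hS : Cardinal.mk S ≤ c) : c < Cardinal.mk (W \ S : Set X) := by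
  by_contra hle
  push_neg at hle
  have h1 : Cardinal.mk W ≤ Cardinal.mk ((W \ S) ∪ S : Set X) :=
    Cardinal.mk_le_mk_of_subset (fun x hx => by
      by_cases hxS : x ∈ S
      · exact Or.inr hxS
      · exact Or.inl ⟨hx, hxS⟩)
  have h2 : Cardinal.mk ((W \ S) ∪ S : Set X) ≤ Cardinal.mk (W \ S : Set X) + Cardinal.mk S :=
    Cardinal.mk_union_le _ _
  have : Cardinal.mk W ≤ c := h1.trans (h2.trans (by
    calc Cardinal.mk (W \ S : Set X) + Cardinal.mk S ≤ c + c := add_le_add hle hS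
    _ = c := Cardinal.add_eq_self hc))
  exact absurd (hW.trans_le this) (lt_irrefl c)

lemma big_split (hc : ℵ₀ ≤ c) {W : Set X} (hW : c < Cardinal.mk W) :
    ∃ A B : Set X, A ⊆ W ∧ B ⊆ W ∧ Disjoint A B ∧ c < Cardinal.mk A ∧ c < Cardinal.mk B := by
  obtain ⟨S, hSW, hS⟩ := Cardinal.le_mk_iff_exists_subset.mp (Order.succ_le_of_lt hW)
  have hSinf : ℵ₀ ≤ Cardinal.mk S := hc.trans ((Order.le_succ c).trans hS.ge)
  have hcS : c < Cardinal.mk S := by rw [hS]; exact Order.lt_succ c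
  have hsum : Cardinal.mk (↥S ⊕ ↥S) = Cardinal.mk S := by
    rw [Cardinal.mk_sum]; simp [Cardinal.add_eq_self hSinf]
  obtain ⟨e⟩ := Cardinal.eq.mp hsum
  set A : Set X := Subtype.val '' (Set.range fun a : ↥S => (e (Sum.inl a) : ↥S))
  set B : Set X := Subtype.val '' (Set.range fun a : ↥S => (e (Sum.inr a) : ↥S))
  have hinj : Function.Injective (Subtype.val : ↥S → X) := Subtype.val_injective
  refine ⟨A, B, ?_, ?_, ?_, ?_, ?_⟩
  · rintro x ⟨y, _, rfl⟩; exact hSW y.2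
  · rintro x ⟨y, _, rfl⟩; exact hSW y.2
  · rw [Set.disjoint_iff]
    rintro x ⟨⟨y, ⟨a, rfl⟩, rfl⟩, ⟨z, ⟨b, hb⟩, hz⟩⟩
    have : z = e (Sum.inl a) := hinj hz
    rw [this] at hb
    exact Sum.inl_ne_inr (e.injective hb).symm
  · have : Cardinal.mk A = Cardinal.mk S := by
      rw [Cardinal.mk_image_eq hinj, Cardinal.mk_range_eq _
        (fun a b hab => Sum.inl_injective (e.injective hab))]
    rw [this]; exact hcS
  · have : Cardinal.mk B = Cardinal.mk S := by
      rw [Cardinal.mk_image_eq hinj, Cardinal.mk_range_eq _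
        (fun a b hab => Sum.inr_injective (e.injective hab))]
    rw [this]; exact hcS

lemma exists_condensation_point (hc : ℵ₀ ≤ c) {D : Set X} (hD : Dense D)
    (hDc : Cardinal.mk D ≤ c) {W : Set X} (hW : c < Cardinal.mk W) :
    ∃ x ∈ W, ∀ r > (0:ℝ), c < Cardinal.mk (W ∩ Metric.ball x r : Set X) := by
  by_contra hno
  push_neg at hno
  -- every point of W has a small ball
  have key : ∀ x ∈ W, ∃ r > (0:ℝ), Cardinal.mk (W ∩ Metric.ball x r : Set X) ≤ c := by
    intro x hx
    obtain ⟨r, hr, h⟩ := hno x hx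
    exact ⟨r, hr, h⟩
  set ι : Type u := ↥D × ULift.{u} ℚ
  have hι : Cardinal.mk ι ≤ c := by
    have h1 : Cardinal.mk ι = Cardinal.mk D * Cardinal.mk (ULift.{u} ℚ) := by
      rw [Cardinal.mk_prod]; simp
    rw [h1, Cardinal.mk_eq_aleph0 (ULift.{u} ℚ)]
    calc Cardinal.mk D * ℵ₀ ≤ c * c := mul_le_mul' hDc hc
    _ = c := Cardinal.mul_eq_self hc
  set A : ι → Set X := fun p =>
    if Cardinal.mk (W ∩ Metric.ball (p.1 : X) (p.2.down : ℝ) : Set X) ≤ c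
    then W ∩ Metric.ball (p.1 : X) (p.2.down : ℝ) else ∅
  have hA : ∀ p, Cardinal.mk (A p) ≤ c := by
    intro p
    by_cases h : Cardinal.mk (W ∩ Metric.ball (p.1 : X) (p.2.down : ℝ) : Set X) ≤ c
    · simp only [A, if_pos h]; exact h
    · simp only [A, if_neg h, Cardinal.mk_emptyCollection]
      exact (Cardinal.aleph0_pos.le.trans hc)
  have hcover : W ⊆ ⋃ p, A p := by
    intro x hx
    obtain ⟨r, hr, hsmall⟩ := key x hx
    obtain ⟨d, hdball, hdD⟩ := Metric.dense_iff.mp hD x (r/3) (by linarith)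
    have hdx : dist d x < r/3 := Metric.mem_ball.mp hdball
    obtain ⟨q, hq1, hq2⟩ := exists_rat_btwn (show r/3 < r/2 by linarith)
    have hxball : x ∈ Metric.ball d (q:ℝ) := by
      have : dist x d < (q:ℝ) := by rw [dist_comm]; exact hdx.trans hq1
      exact Metric.mem_ball.mpr this
    have hsub : Metric.ball d (q:ℝ) ⊆ Metric.ball x r := by
      intro y hy
      have hyd : dist y d < (q:ℝ) := Metric.mem_ball.mp hy
      have : dist y x ≤ dist y d + dist d x := dist_triangle _ _ _
      have hq2' : (q:ℝ) < r/2 := hq2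
      refine Metric.mem_ball.mpr ?_
      calc dist y x ≤ dist y d + dist d x := dist_triangle _ _ _
      _ < r/2 + r/3 := add_lt_add (hyd.trans hq2') hdx
      _ < r := by linarith
    have hsmall2 : Cardinal.mk (W ∩ Metric.ball d (q:ℝ) : Set X) ≤ c :=
      le_trans (Cardinal.mk_le_mk_of_subset (Set.inter_subset_inter_right W hsub)) hsmall
    refine Set.mem_iUnion.mpr ⟨⟨⟨d, hdD⟩, ⟨q⟩⟩, ?_⟩
    simp only [A, if_pos hsmall2]
    exact ⟨hx, hxball⟩
  obtain ⟨p, hp⟩ := big_pigeon hc A hι (hW.trans_le (Cardinal.mk_le_mk_of_subset hcover))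
  exact absurd hp (not_lt.mpr (hA p))

lemma LS_pos {f : X → X} {Y : Set X} (hY : Scrambled f Y) {x y : X}
    (hx : x ∈ Y) (hy : y ∈ Y) (hxy : x ≠ y) : 0 < LS f x y :=
  pos_iff_ne_zero.mpr fun h => (hY x hx y hy hxy).2 h

lemma LS_proximal {f : X → X} {Y : Set X} (hY : Scrambled f Y) {x y : X}
    (hx : x ∈ Y) (hy : y ∈ Y) (hxy : x ≠ y) :
    Filter.liminf (fun n => edist (f^[n] x) (f^[n] y)) Filter.atTop = 0 :=
  (hY x hx y hy hxy).1

lemma inv_arith {j m : ℕ} (h : 2*j ≤ m) : ((m : ℕ) : ℝ≥0∞)⁻¹ + ((m : ℕ) : ℝ≥0∞)⁻¹ ≤ ((j:ℕ) : ℝ≥0∞)⁻¹ := by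
  have h1 : ((m : ℕ) : ℝ≥0∞)⁻¹ ≤ ((j : ℝ≥0∞))⁻¹ / 2 := by
    have h2 : ((j : ℝ≥0∞))⁻¹ / 2 = ((j : ℝ≥0∞) * 2)⁻¹ := by
      rw [ENNReal.mul_inv (Or.inr (by norm_num)) (Or.inl (ENNReal.natCast_ne_top j))]
      rw [div_eq_mul_inv]
    rw [h2]
    refine ENNReal.inv_le_inv' ?_
    calc (j : ℝ≥0∞) * 2 = ((2*j : ℕ) : ℝ≥0∞) := by push_cast; ring
    _ ≤ ((m : ℕ) : ℝ≥0∞) := Nat.cast_le.mpr h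
  calc ((m : ℕ) : ℝ≥0∞)⁻¹ + ((m : ℕ) : ℝ≥0∞)⁻¹ ≤ (j : ℝ≥0∞)⁻¹/2 + (j : ℝ≥0∞)⁻¹/2 :=
    add_le_add h1 h1
  _ = (j : ℝ≥0∞)⁻¹ := ENNReal.add_halves _

/-- The key split lemma: any big subset of a scrambled set contains two big subsets
uniformly separated in the limsup pseudometric. -/
lemma split_lemma (hc : ℵ₀ ≤ c) {f : X → X} {Y : Set X} (hY : Scrambled f Y)
    {W : Set X} (hWY : W ⊆ Y) (hW : c < Cardinal.mk W) :
    ∃ W₀ W₁ : Set X, ∃ δ : ℝ≥0∞, W₀ ⊆ W ∧ W₁ ⊆ W ∧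
      c < Cardinal.mk W₀ ∧ c < Cardinal.mk W₁ ∧ 0 < δ ∧ δ ≤ 1 ∧
      ∀ x ∈ W₀, ∀ y ∈ W₁, δ ≤ LS f x y := by
  classical
  set near : X → ℕ → Set X := fun v j => {w ∈ W | LS f v w ≤ ((j:ℕ) : ℝ≥0∞)⁻¹} with hnear
  by_cases hcase : ∃ v ∈ W, ∀ j : ℕ, c < Cardinal.mk (near v j)
  · -- Case 1 : some point has big clusters at every scale
    obtain ⟨v, hvW, hv⟩ := hcase
    have hbig : c < Cardinal.mk (⋃ p : ULift.{u} ℕ,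
        {w ∈ W | ((p.down + 1 : ℕ) : ℝ≥0∞)⁻¹ < LS f v w} : Set X) := by
      refine lt_of_lt_of_le (big_diff hc hW (S := {v}) ?_) (Cardinal.mk_le_mk_of_subset ?_)
      · rw [Cardinal.mk_singleton]; exact one_le_aleph0.trans hc
      · rintro w ⟨hwW, hwv⟩
        have hvw : v ≠ w := fun h => hwv (by simp [h])
        have hpos : 0 < LS f v w := LS_pos hY (hWY hvW) (hWY hwW) hvw
        obtain ⟨n, hn⟩ := ENNReal.exists_inv_nat_lt hpos.ne'
        refine Set.mem_iUnion.mpr ⟨⟨n⟩, hwW, lt_of_le_of_lt ?_ hn⟩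
        exact ENNReal.inv_le_inv' (Nat.cast_le.mpr (Nat.le_succ n))
    obtain ⟨p, hp⟩ := big_pigeon hc _ (by rw [Cardinal.mk_eq_aleph0 (ULift.{u} ℕ)]; exact hc) hbig
    set j₀ : ℕ := p.down + 1 with hj₀
    refine ⟨near v (4*j₀), {w ∈ W | ((j₀:ℕ) : ℝ≥0∞)⁻¹ < LS f v w}, ((4*j₀ : ℕ) : ℝ≥0∞)⁻¹,
      fun x hx => hx.1, fun x hx => hx.1, hv _, hp, ?_, ?_, ?_⟩
    · exact ENNReal.inv_pos.mpr (ENNReal.natCast_ne_top _)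
    · exact ENNReal.inv_le_one.mpr (by exact_mod_cast Nat.one_le_iff_ne_zero.mpr (by omega))
    · rintro x ⟨hxW, hxnear⟩ y ⟨hyW, hyfar⟩
      by_contra hlt
      push_neg at hlt
      have h1 : LS f v y ≤ LS f v x + LS f x y := LS_triangle f v x y
      have h2 : LS f v y < ((4*j₀:ℕ) : ℝ≥0∞)⁻¹ + ((4*j₀:ℕ) : ℝ≥0∞)⁻¹ := by
        refine lt_of_le_of_lt (h1.trans (add_le_add hxnear le_rfl)) ?_
        exact ENNReal.add_lt_add_left (ENNReal.inv_ne_top.mpr (by exact_mod_cast (by omega : (4*j₀ : ℕ) ≠ 0))) hlt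
      exact absurd (h2.trans_le (inv_arith (by omega))) (not_lt.mpr hyfar.le)
  · -- Case 2 : every point is eventually isolated-mod-small
    push_neg at hcase
    have hcover : W ⊆ ⋃ p : ULift.{u} ℕ, {v ∈ W | Cardinal.mk (near v p.down) ≤ c} := by
      intro v hv
      obtain ⟨j, hj⟩ := hcase v hv
      exact Set.mem_iUnion.mpr ⟨⟨j⟩, hv, hj⟩
    obtain ⟨p, hp⟩ := big_pigeon hc _ (by rw [Cardinal.mk_eq_aleph0 (ULift.{u} ℕ)]; exact hc)
      (hW.trans_le (Cardinal.mk_le_mk_of_subset hcover))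
    set s : ℕ := p.down with hs
    set V : Set X := {v ∈ W | Cardinal.mk (near v s) ≤ c} with hV
    have hs0 : s ≠ 0 := by
      intro h0
      obtain ⟨v₀, hv₀⟩ := big_nonempty hp
      have hnw : near v₀ s = W := by
        ext w
        constructor
        · exact fun h => h.1
        · intro hw
          refine ⟨hw, ?_⟩
          simp [h0]
      exact absurd (hnw ▸ hv₀.2) (not_le.mpr hW)
    obtain ⟨M, hM⟩ := zorn_subset
      {M : Set X | M ⊆ V ∧ ∀ x ∈ M, ∀ y ∈ M, x ≠ y → ((s:ℕ) : ℝ≥0∞)⁻¹ < LS f x y}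
      (by
        intro ch hch hchain
        refine ⟨⋃₀ ch, ⟨?_, ?_⟩, fun t ht => Set.subset_sUnion_of_mem ht⟩
        · exact Set.sUnion_subset fun t ht => (hch ht).1
        · rintro x ⟨tx, htx, hxtx⟩ y ⟨ty, hty, hyty⟩ hxy
          rcases hchain.total htx hty with h | h
          · exact (hch hty).2 x (h hxtx) y hyty hxy
          · exact (hch htx).2 x hxtx y (h hyty) hxy)
    obtain ⟨⟨hMV, hMsep⟩, hMmax⟩ := hM
    have hMbig : c < Cardinal.mk M := by
      by_contra hsmall
      push_neg at hsmall
      have hVsub : V ⊆ M ∪ ⋃ m : ↥M, near (m : X) s := by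
        intro v hvV
        by_cases hvM : v ∈ M
        · exact Or.inl hvM
        refine Or.inr ?_
        have hnot : ¬ (M ∪ {v} ⊆ V ∧ ∀ x ∈ M ∪ {v}, ∀ y ∈ M ∪ {v}, x ≠ y →
            ((s:ℕ) : ℝ≥0∞)⁻¹ < LS f x y) := by
          intro hin
          have hsub := hMmax hin Set.subset_union_left
          exact hvM (hsub (Or.inr rfl))
        push_neg at hnot
        have hsubV : M ∪ {v} ⊆ V := Set.union_subset hMV (by simpa using hvV)
        obtain ⟨x, hx, y, hy, hxy, hsep⟩ := hnot hsubV
        have key : ∃ m ∈ M, LS f (m : X) v ≤ ((s:ℕ) : ℝ≥0∞)⁻¹ := by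
          rcases hx with hxM | hxv
          · rcases hy with hyM | hyv
            · exact absurd (hMsep x hxM y hyM hxy) (not_lt.mpr hsep)
            · rw [Set.mem_singleton_iff] at hyv
              subst hyv
              exact ⟨x, hxM, by first | exact hsep | rwa [LS_comm] at hsep⟩
          · rw [Set.mem_singleton_iff] at hxv
            subst hxv
            rcases hy with hyM | hyv
            · exact ⟨y, hyM, by first | exact hsep | rwa [LS_comm] at hsep⟩
            · rw [Set.mem_singleton_iff] at hyv
              exact absurd hyv.symm hxy
        obtain ⟨m, hmM, hmv⟩ := key
        exact Set.mem_iUnion.mpr ⟨⟨m, hmM⟩, hvV.1, by first | exact hmv | rwa [LS_comm] at hmv⟩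
      have hbound : Cardinal.mk V ≤ c := by
        refine le_trans (Cardinal.mk_le_mk_of_subset hVsub) (le_trans (Cardinal.mk_union_le _ _) ?_)
        have h1 : Cardinal.mk (⋃ m : ↥M, near (m : X) s : Set X) ≤ c := by
          refine le_trans (Cardinal.mk_iUnion_le _) ?_
          calc Cardinal.mk M * ⨆ m : ↥M, Cardinal.mk (near (m : X) s)
              ≤ c * c := mul_le_mul' hsmall (ciSup_le' fun m => (hMV m.2).2)
          _ = c := Cardinal.mul_eq_self hc
        calc Cardinal.mk M + Cardinal.mk (⋃ m : ↥M, near (m : X) s : Set X) ≤ c + c :=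
          add_le_add hsmall h1
        _ = c := Cardinal.add_eq_self hc
      exact absurd (hp.trans_le hbound) (lt_irrefl c)
    obtain ⟨A, B, hAM, hBM, hAB, hA, hB⟩ := big_split hc hMbig
    refine ⟨A, B, ((s:ℕ) : ℝ≥0∞)⁻¹, hAM.trans (hMV.trans fun x hx => hx.1),
      hBM.trans (hMV.trans fun x hx => hx.1), hA, hB, ?_, ?_, ?_⟩
    · exact ENNReal.inv_pos.mpr (ENNReal.natCast_ne_top _)
    · exact ENNReal.inv_le_one.mpr (by exact_mod_cast Nat.one_le_iff_ne_zero.mpr hs0)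
    · intro x hx y hy
      have hxy : x ≠ y := fun h => Set.disjoint_left.mp hAB hx (h ▸ hy)
      exact (hMsep x (hAM hx) y (hBM hy) hxy).le

/-- small real radius making `edist` small -/
lemma exists_edist_small (ε : ℝ≥0∞) (hε : 0 < ε) :
    ∃ r : ℝ, 0 < r ∧ ∀ x y : X, dist x y ≤ r → edist x y < ε := by
  obtain ⟨k, hk⟩ := ENNReal.exists_inv_nat_lt hε.ne'
  refine ⟨1/(k+2 : ℝ), by positivity, fun x y hxy => ?_⟩
  have h1 : edist x y ≤ ENNReal.ofReal (1/(k+2:ℝ)) := by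
    rw [edist_dist]
    exact ENNReal.ofReal_le_ofReal hxy
  have h2 : ENNReal.ofReal (1/(k+2:ℝ)) = (((k+2 : ℕ) : ℝ≥0∞))⁻¹ := by
    rw [one_div, ENNReal.ofReal_inv_of_pos (by positivity)]
    rw [show ((k:ℝ)+2) = ((k+2:ℕ):ℝ) by push_cast; ring, ENNReal.ofReal_natCast]
  have h3 : (((k+2:ℕ)) : ℝ≥0∞)⁻¹ ≤ ((k : ℕ) : ℝ≥0∞)⁻¹ :=
    ENNReal.inv_le_inv' (Nat.cast_le.mpr (by omega))
  calc edist x y ≤ (((k+2:ℕ)) : ℝ≥0∞)⁻¹ := h2 ▸ h1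
  _ ≤ ((k:ℕ) : ℝ≥0∞)⁻¹ := h3
  _ < ε := hk

structure Conf (X : Type u) (n : ℕ) where
  B : (Fin n → Bool) → Set X
  W : (Fin n → Bool) → Set X
  δ : (Fin n → Bool) → (Fin n → Bool) → ℝ≥0∞

variable {f : X → X} {Y : Set X}

structure Pre (f : X → X) (Y : Set X) (c : Cardinal.{u}) (n : ℕ) (C : Conf X n) : Prop where
  closed : ∀ v, IsClosed (C.B v)
  diam : ∀ v, ∀ z ∈ C.B v, ∀ w ∈ C.B v, edist z w ≤ (2:ℝ≥0∞)⁻¹ ^ n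
  WB : ∀ v, C.W v ⊆ interior (C.B v)
  WY : ∀ v, C.W v ⊆ Y
  Wbig : ∀ v, c < Cardinal.mk (C.W v)
  disj : ∀ v w, v ≠ w → Disjoint (C.B v) (C.B w)
  δpos : ∀ v w, v ≠ w → 0 < C.δ v w
  δone : ∀ v w, C.δ v w ≤ 1
  cross : ∀ v w, v ≠ w → ∀ x ∈ C.W v, ∀ y ∈ C.W w, C.δ v w ≤ LS f x y

structure Good (f : X → X) (Y : Set X) (c : Cardinal.{u}) (n : ℕ) (C : Conf X n)
    extends Pre f Y c n C : Prop where
  certP : ∀ v w, v ≠ w → ∃ m, n ≤ m ∧ ∀ z ∈ C.B v, ∀ y ∈ C.B w,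
    edist (f^[m] z) (f^[m] y) ≤ ((n:ℕ) : ℝ≥0∞)⁻¹
  certS : ∀ v w, v ≠ w → ∃ m, n ≤ m ∧ ∀ z ∈ C.B v, ∀ y ∈ C.B w,
    C.δ v w / 4 ≤ edist (f^[m] z) (f^[m] y)

def ConfExt {n : ℕ} (C : Conf X n) (C' : Conf X (n+1)) : Prop :=
  (∀ v : Fin (n+1) → Bool, C'.B v ⊆ C.B (v ∘ Fin.castSucc)) ∧
  (∀ v : Fin (n+1) → Bool, C'.W v ⊆ C.W (v ∘ Fin.castSucc)) ∧
  (∀ v w : Fin (n+1) → Bool, v ∘ Fin.castSucc ≠ w ∘ Fin.castSucc →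
    C'.δ v w = C.δ (v ∘ Fin.castSucc) (w ∘ Fin.castSucc))

lemma quarter_add (a : ℝ≥0∞) : a/4 + a/4 = a/2 := by
  have h : a/4 = a/2/2 := by
    simp only [div_eq_mul_inv, mul_assoc]
    congr 1
    rw [← ENNReal.mul_inv (by norm_num) (by norm_num)]
    norm_num
  rw [h, ENNReal.add_halves]

/-- refine the configuration to certify proximality and separation for one ordered pair -/
lemma refine_pair (hc : ℵ₀ ≤ c) {D : Set X} (hD : Dense D) (hDc : Cardinal.mk D ≤ c)
    (hf : Continuous f) (hY : Scrambled f Y) {n : ℕ} {C : Conf X n}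
    (hC : Pre f Y c n C) {a b : Fin n → Bool} (hab : a ≠ b) :
    ∃ C' : Conf X n, Pre f Y c n C' ∧ C'.δ = C.δ ∧
      (∀ v, C'.B v ⊆ C.B v) ∧ (∀ v, C'.W v ⊆ C.W v) ∧
      (∃ m, n ≤ m ∧ ∀ z ∈ C'.B a, ∀ y ∈ C'.B b,
        edist (f^[m] z) (f^[m] y) ≤ ((n:ℕ) : ℝ≥0∞)⁻¹) ∧
      (∃ m, n ≤ m ∧ ∀ z ∈ C'.B a, ∀ y ∈ C'.B b,
        C.δ a b / 4 ≤ edist (f^[m] z) (f^[m] y)) := by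
  classical
  obtain ⟨xa, hxaW, hxacond⟩ := exists_condensation_point hc hD hDc (hC.Wbig a)
  obtain ⟨xb, hxbW, hxbcond⟩ := exists_condensation_point hc hD hDc (hC.Wbig b)
  have hxaY : xa ∈ Y := hC.WY a hxaW
  have hxbY : xb ∈ Y := hC.WY b hxbW
  have hd0 := hC.δpos a b hab
  have hdLS : C.δ a b ≤ LS f xa xb := hC.cross a b hab xa hxaW xb hxbW
  have hne : xa ≠ xb := by
    intro h
    rw [h, LS_self] at hdLS
    exact absurd (lt_of_lt_of_le hd0 hdLS) (lt_irrefl 0)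
  -- target quantities
  set q : ℝ≥0∞ := ((n:ℕ) : ℝ≥0∞)⁻¹ with hq
  have hqpos : 0 < q := ENNReal.inv_pos.mpr (ENNReal.natCast_ne_top _)
  set q2 : ℝ≥0∞ := q / 2 with hq2
  set q4 : ℝ≥0∞ := q2 / 2 with hq4
  have hq2pos : 0 < q2 := ENNReal.div_pos hqpos.ne' (by norm_num)
  have hq4pos : 0 < q4 := ENNReal.div_pos hq2pos.ne' (by norm_num)
  set d0 : ℝ≥0∞ := C.δ a b with hd0'
  set s8 : ℝ≥0∞ := (d0 / 4) / 2 with hs8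
  have hd0top : d0 ≠ ⊤ := ne_top_of_le_ne_top one_ne_top (hC.δone a b)
  have hs8pos : 0 < s8 :=
    ENNReal.div_pos (ENNReal.div_pos hd0.ne' (by norm_num)).ne' (by norm_num)
  -- proximal time
  have hprox : Filter.liminf (fun k => edist (f^[k] xa) (f^[k] xb)) Filter.atTop = 0 :=
    (hY xa hxaY xb hxbY hne).1
  have hfreqP : ∃ᶠ k in Filter.atTop, edist (f^[k] xa) (f^[k] xb) < q2 :=
    frequently_lt_of_liminf_lt (by isBoundedDefault) (by rw [hprox]; exact hq2pos)
  obtain ⟨m, hmn, hmP⟩ := Filter.frequently_atTop.mp hfreqP n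
  -- separation time
  have hhalf : d0 / 2 < LS f xa xb :=
    lt_of_lt_of_le (ENNReal.half_lt_self hd0.ne' hd0top) hdLS
  have hfreqS : ∃ᶠ k in Filter.atTop, d0 / 2 < edist (f^[k] xa) (f^[k] xb) :=
    frequently_lt_of_lt_limsup (by isBoundedDefault) hhalf
  obtain ⟨m', hm'n, hm'S⟩ := Filter.frequently_atTop.mp hfreqS n
  -- real radii for continuity targets
  obtain ⟨rq, hrqpos, hrq⟩ := exists_edist_small (X := X) q4 hq4pos
  obtain ⟨rs, hrspos, hrs⟩ := exists_edist_small (X := X) s8 hs8pos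
  -- continuity radii at xa and xb
  have hcont : ∀ (x : X) (k : ℕ) (r : ℝ), 0 < r → ∃ d > (0:ℝ), ∀ z : X, dist z x < d →
      dist (f^[k] z) (f^[k] x) < r := by
    intro x k r hr
    have := Metric.continuousAt_iff.mp ((hf.iterate k).continuousAt (x := x)) r hr
    obtain ⟨d, hd, hball⟩ := this
    exact ⟨d, hd, fun z hz => hball hz⟩
  obtain ⟨da1, hda1, hda1h⟩ := hcont xa m rq hrqpos
  obtain ⟨da2, hda2, hda2h⟩ := hcont xa m' rs hrspos
  obtain ⟨db1, hdb1, hdb1h⟩ := hcont xb m rq hrqpos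
  obtain ⟨db2, hdb2, hdb2h⟩ := hcont xb m' rs hrspos
  -- interior radii
  obtain ⟨ra3, hra3, hra3h⟩ := Metric.mem_nhds_iff.mp
    (mem_interior_iff_mem_nhds.mp (hC.WB a hxaW))
  obtain ⟨rb3, hrb3, hrb3h⟩ := Metric.mem_nhds_iff.mp
    (mem_interior_iff_mem_nhds.mp (hC.WB b hxbW))
  set ρa : ℝ := (min (min da1 da2) ra3) / 2 with hρa
  set ρb : ℝ := (min (min db1 db2) rb3) / 2 with hρb
  have hρapos : 0 < ρa := by rw [hρa]; positivity
  have hρbpos : 0 < ρb := by rw [hρb]; positivity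
  have hBasub : Metric.closedBall xa ρa ⊆ C.B a := by
    refine subset_trans (Metric.closedBall_subset_ball ?_) hra3h
    have h1 : ρa ≤ ra3/2 := by
      rw [hρa]
      have h2 : min (min da1 da2) ra3 ≤ ra3 := min_le_right _ _
      linarith
    linarith
  have hBbsub : Metric.closedBall xb ρb ⊆ C.B b := by
    refine subset_trans (Metric.closedBall_subset_ball ?_) hrb3h
    have h1 : ρb ≤ rb3/2 := by
      rw [hρb]
      have h2 : min (min db1 db2) rb3 ≤ rb3 := min_le_right _ _
      linarith
    linarith
  have hρa_lt_da1 : ρa < da1 := by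
    rw [hρa]
    have h1 : min (min da1 da2) ra3 ≤ da1 := le_trans (min_le_left _ _) (min_le_left _ _)
    linarith
  have hρa_lt_da2 : ρa < da2 := by
    rw [hρa]
    have h1 : min (min da1 da2) ra3 ≤ da2 := le_trans (min_le_left _ _) (min_le_right _ _)
    linarith
  have hρb_lt_db1 : ρb < db1 := by
    rw [hρb]
    have h1 : min (min db1 db2) rb3 ≤ db1 := le_trans (min_le_left _ _) (min_le_left _ _)
    linarith
  have hρb_lt_db2 : ρb < db2 := by
    rw [hρb]
    have h1 : min (min db1 db2) rb3 ≤ db2 := le_trans (min_le_left _ _) (min_le_right _ _)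
    linarith
  have hB'sub : ∀ v, (if v = a then Metric.closedBall xa ρa else
      if v = b then Metric.closedBall xb ρb else C.B v) ⊆ C.B v := by
    intro v
    by_cases hva : v = a
    · subst hva; simp only [if_pos rfl]; exact hBasub
    by_cases hvb : v = b
    · subst hvb; simp only [if_neg hva, if_pos rfl]; exact hBbsub
    · simp only [if_neg hva, if_neg hvb]; exact subset_rfl
  have hW'sub : ∀ v, (if v = a then C.W a ∩ Metric.ball xa ρa else
      if v = b then C.W b ∩ Metric.ball xb ρb else C.W v) ⊆ C.W v := by
    intro v
    by_cases hva : v = a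
    · subst hva; simp only [if_pos rfl]; exact Set.inter_subset_left
    by_cases hvb : v = b
    · subst hvb; simp only [if_neg hva, if_pos rfl]; exact Set.inter_subset_left
    · simp only [if_neg hva, if_neg hvb]; exact subset_rfl
  classical
  refine ⟨⟨fun v => if v = a then Metric.closedBall xa ρa else
      if v = b then Metric.closedBall xb ρb else C.B v,
    fun v => if v = a then C.W a ∩ Metric.ball xa ρa else
      if v = b then C.W b ∩ Metric.ball xb ρb else C.W v, C.δ⟩, ?_, rfl, ?_, ?_, ?_, ?_⟩
  case refine_2 => exact hB'sub
  case refine_3 => exact hW'sub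
  case refine_1 =>
    constructor
    · intro v
      by_cases hva : v = a
      · subst hva; simp only [if_pos rfl]; exact Metric.isClosed_closedBall
      by_cases hvb : v = b
      · subst hvb; simp only [if_neg hva, if_pos rfl]; exact Metric.isClosed_closedBall
      · simp only [if_neg hva, if_neg hvb]; exact hC.closed v
    · intro v z hz w hw
      exact hC.diam v z (hB'sub v hz) w (hB'sub v hw)
    · intro v
      by_cases hva : v = a
      · subst hva
        simp only [if_pos rfl]
        exact subset_trans Set.inter_subset_right Metric.ball_subset_interior_closedBall
      by_cases hvb : v = b
      · subst hvb
        simp only [if_neg hva, if_pos rfl]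
        exact subset_trans Set.inter_subset_right Metric.ball_subset_interior_closedBall
      · simp only [if_neg hva, if_neg hvb]; exact hC.WB v
    · intro v
      by_cases hva : v = a
      · subst hva; simp only [if_pos rfl]
        exact subset_trans Set.inter_subset_left (hC.WY v)
      by_cases hvb : v = b
      · subst hvb; simp only [if_neg hva, if_pos rfl]
        exact subset_trans Set.inter_subset_left (hC.WY v)
      · simp only [if_neg hva, if_neg hvb]; exact hC.WY v
    · intro v
      by_cases hva : v = a
      · subst hva; simp only [if_pos rfl]; exact hxacond ρa hρapos
      by_cases hvb : v = b
      · subst hvb; simp only [if_neg hva, if_pos rfl]; exact hxbcond ρb hρbpos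
      · simp only [if_neg hva, if_neg hvb]; exact hC.Wbig v
    · intro v w hvw
      exact (hC.disj v w hvw).mono (hB'sub v) (hB'sub w)
    · exact hC.δpos
    · exact hC.δone
    · intro v w hvw x hx y hy
      exact hC.cross v w hvw x (hW'sub v hx) y (hW'sub w hy)
  case refine_4 =>
    refine ⟨m, hmn, ?_⟩
    intro z hz y hy
    simp only [if_pos rfl, if_neg (Ne.symm hab)] at hz hy
    have hza : dist z xa < da1 := lt_of_le_of_lt (Metric.mem_closedBall.mp hz) hρa_lt_da1
    have hyb : dist y xb < db1 := lt_of_le_of_lt (Metric.mem_closedBall.mp hy) hρb_lt_db1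
    have e1 : edist (f^[m] z) (f^[m] xa) < q4 := hrq _ _ (hda1h z hza).le
    have e3 : edist (f^[m] y) (f^[m] xb) < q4 := hrq _ _ (hdb1h y hyb).le
    have e3' : edist (f^[m] xb) (f^[m] y) < q4 := by rwa [edist_comm] at e3
    have hsum : q4 + q2 + q4 = q := by
      rw [hq4, add_right_comm, ENNReal.add_halves, hq2, ENNReal.add_halves]
    calc edist (f^[m] z) (f^[m] y)
        ≤ edist (f^[m] z) (f^[m] xa) + edist (f^[m] xa) (f^[m] xb)
          + edist (f^[m] xb) (f^[m] y) := edist_triangle4 _ _ _ _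
    _ ≤ q4 + q2 + q4 := add_le_add (add_le_add e1.le hmP.le) e3'.le
    _ = q := hsum
  case refine_5 =>
    refine ⟨m', hm'n, ?_⟩
    intro z hz y hy
    simp only [if_pos rfl, if_neg (Ne.symm hab)] at hz hy
    by_contra hlt
    push_neg at hlt
    have hza : dist z xa < da2 := lt_of_le_of_lt (Metric.mem_closedBall.mp hz) hρa_lt_da2
    have hyb : dist y xb < db2 := lt_of_le_of_lt (Metric.mem_closedBall.mp hy) hρb_lt_db2
    have e1 : edist (f^[m'] z) (f^[m'] xa) < s8 := hrs _ _ (hda2h z hza).le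
    have e1' : edist (f^[m'] xa) (f^[m'] z) < s8 := by rwa [edist_comm] at e1
    have e3 : edist (f^[m'] y) (f^[m'] xb) < s8 := hrs _ _ (hdb2h y hyb).le
    have hchain : edist (f^[m'] xa) (f^[m'] xb) < s8 + d0/4 + s8 := by
      refine lt_of_le_of_lt (edist_triangle4 _ (f^[m'] z) (f^[m'] y) _) ?_
      exact ENNReal.add_lt_add (ENNReal.add_lt_add e1' hlt) e3
    have hsum2 : s8 + d0/4 + s8 = d0/2 := by
      rw [hs8, add_right_comm, ENNReal.add_halves, quarter_add]
    rw [hsum2] at hchain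
    exact absurd (hm'S.trans hchain) (lt_irrefl _)

/-- certify a whole list of pairs -/
lemma refine_list (hc : ℵ₀ ≤ c) {D : Set X} (hD : Dense D) (hDc : Cardinal.mk D ≤ c)
    (hf : Continuous f) (hY : Scrambled f Y) {n : ℕ} {C : Conf X n}
    (hC : Pre f Y c n C) (T : List ((Fin n → Bool) × (Fin n → Bool))) :
    ∃ C' : Conf X n, Pre f Y c n C' ∧ C'.δ = C.δ ∧
      (∀ v, C'.B v ⊆ C.B v) ∧ (∀ v, C'.W v ⊆ C.W v) ∧
      ∀ p ∈ T, p.1 ≠ p.2 →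
        (∃ m, n ≤ m ∧ ∀ z ∈ C'.B p.1, ∀ y ∈ C'.B p.2,
          edist (f^[m] z) (f^[m] y) ≤ ((n:ℕ) : ℝ≥0∞)⁻¹) ∧
        (∃ m, n ≤ m ∧ ∀ z ∈ C'.B p.1, ∀ y ∈ C'.B p.2,
          C.δ p.1 p.2 / 4 ≤ edist (f^[m] z) (f^[m] y)) := by
  induction T with
  | nil =>
    exact ⟨C, hC, rfl, fun v => subset_rfl, fun v => subset_rfl, fun p hp => absurd hp (by simp)⟩
  | cons p T ih =>
    obtain ⟨C1, hC1, hδ1, hB1, hW1, hT1⟩ := ih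
    by_cases hp12 : p.1 = p.2
    · refine ⟨C1, hC1, hδ1, hB1, hW1, ?_⟩
      intro q hq hq12
      rcases List.mem_cons.mp hq with rfl | hq
      · exact absurd hp12 hq12
      · exact hT1 q hq hq12
    · obtain ⟨C2, hC2, hδ2, hB2, hW2, hcP, hcS⟩ := refine_pair hc hD hDc hf hY hC1 hp12
      refine ⟨C2, hC2, hδ2.trans hδ1, fun v => (hB2 v).trans (hB1 v),
        fun v => (hW2 v).trans (hW1 v), ?_⟩
      intro q hq hq12
      rcases List.mem_cons.mp hq with rfl | hq
      · constructor
        · exact hcP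
        · obtain ⟨m, hm, hcert⟩ := hcS
          refine ⟨m, hm, ?_⟩
          rwa [hδ1] at hcert
      · obtain ⟨⟨m, hm, hcert⟩, ⟨m', hm', hcert'⟩⟩ := hT1 q hq hq12
        exact ⟨⟨m, hm, fun z hz y hy => hcert z (hB2 _ hz) y (hB2 _ hy)⟩,
          ⟨m', hm', fun z hz y hy => hcert' z (hB2 _ hz) y (hB2 _ hy)⟩⟩

lemma edist_le_pow_of_dist {z w : X} {k : ℕ} (h : dist z w ≤ (1/2:ℝ)^k) :
    edist z w ≤ (2:ℝ≥0∞)⁻¹ ^ k := by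
  rw [edist_dist]
  refine le_trans (ENNReal.ofReal_le_ofReal h) ?_
  rw [ENNReal.ofReal_pow (by norm_num)]
  have : ENNReal.ofReal (1/2 : ℝ) = (2:ℝ≥0∞)⁻¹ := by
    rw [one_div, ENNReal.ofReal_inv_of_pos (by norm_num)]
    norm_num
  rw [this]

lemma pow_succ_le_pow (k : ℕ) : (2:ℝ≥0∞)⁻¹ ^ (k+1) ≤ (2:ℝ≥0∞)⁻¹ ^ k := by
  rw [pow_succ]
  calc (2:ℝ≥0∞)⁻¹ ^ k * 2⁻¹ ≤ (2:ℝ≥0∞)⁻¹ ^ k * 1 :=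
    mul_le_mul_right (by simp [ENNReal.inv_le_one]) _
  _ = (2:ℝ≥0∞)⁻¹ ^ k := mul_one _

/-- the data produced when splitting one cell -/
structure SD (f : X → X) (c : Cardinal.{u}) (n : ℕ) (Bv Wv B0 B1 W0 W1 : Set X)
    (δp : ℝ≥0∞) : Prop where
  closed0 : IsClosed B0
  closed1 : IsClosed B1
  sub0 : B0 ⊆ Bv
  sub1 : B1 ⊆ Bv
  dsj : Disjoint B0 B1
  diam0 : ∀ z ∈ B0, ∀ w ∈ B0, edist z w ≤ (2:ℝ≥0∞)⁻¹ ^ (n+1)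
  diam1 : ∀ z ∈ B1, ∀ w ∈ B1, edist z w ≤ (2:ℝ≥0∞)⁻¹ ^ (n+1)
  wint0 : W0 ⊆ interior B0
  wint1 : W1 ⊆ interior B1
  wsub0 : W0 ⊆ Wv
  wsub1 : W1 ⊆ Wv
  wbig0 : c < Cardinal.mk W0
  wbig1 : c < Cardinal.mk W1
  dpos : 0 < δp
  done' : δp ≤ 1
  crossLS : ∀ x ∈ W0, ∀ y ∈ W1, δp ≤ LS f x y

lemma split_cell (hc : ℵ₀ ≤ c) {D : Set X} (hD : Dense D) (hDc : Cardinal.mk D ≤ c)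
    (hY : Scrambled f Y) {n : ℕ} {Bv Wv : Set X}
    (hWB : Wv ⊆ interior Bv) (hWY : Wv ⊆ Y) (hWbig : c < Cardinal.mk Wv) :
    ∃ B0 B1 W0 W1 : Set X, ∃ δp : ℝ≥0∞, SD f c n Bv Wv B0 B1 W0 W1 δp := by
  obtain ⟨W0', W1', δ, hW0sub, hW1sub, hW0big, hW1big, hδpos, hδone, hcross⟩ :=
    split_lemma hc hY hWY hWbig
  obtain ⟨p0, hp0, hp0cond⟩ := exists_condensation_point hc hD hDc hW0big
  obtain ⟨p1, hp1, hp1cond⟩ := exists_condensation_point hc hD hDc hW1big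
  have hp01 : p0 ≠ p1 := by
    intro h
    have := hcross p0 hp0 p1 hp1
    rw [h, LS_self] at this
    exact absurd (lt_of_lt_of_le hδpos this) (lt_irrefl 0)
  obtain ⟨r0, hr0, hr0h⟩ := Metric.mem_nhds_iff.mp
    (mem_interior_iff_mem_nhds.mp (hWB (hW0sub hp0)))
  obtain ⟨r1, hr1, hr1h⟩ := Metric.mem_nhds_iff.mp
    (mem_interior_iff_mem_nhds.mp (hWB (hW1sub hp1)))
  have hdp : 0 < dist p0 p1 := dist_pos.mpr hp01
  set ρ : ℝ := min (min r0 r1) (min (dist p0 p1 / 2) ((1/2:ℝ)^(n+2))) / 2 with hρ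
  have hρpos : 0 < ρ := by
    rw [hρ]
    have h2 : (0:ℝ) < (1/2:ℝ)^(n+2) := by positivity
    have h3 : (0:ℝ) < dist p0 p1 / 2 := by linarith
    positivity
  have hρr0 : ρ < r0 := by
    rw [hρ]
    have h1 : min (min r0 r1) (min (dist p0 p1 / 2) ((1/2:ℝ)^(n+2))) ≤ r0 :=
      le_trans (min_le_left _ _) (min_le_left _ _)
    linarith
  have hρr1 : ρ < r1 := by
    rw [hρ]
    have h1 : min (min r0 r1) (min (dist p0 p1 / 2) ((1/2:ℝ)^(n+2))) ≤ r1 :=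
      le_trans (min_le_left _ _) (min_le_right _ _)
    linarith
  have hρd : 2*ρ < dist p0 p1 := by
    rw [hρ]
    have h1 : min (min r0 r1) (min (dist p0 p1 / 2) ((1/2:ℝ)^(n+2))) ≤ dist p0 p1 / 2 :=
      le_trans (min_le_right _ _) (min_le_left _ _)
    linarith
  have hρdiam : 2*ρ ≤ (1/2:ℝ)^(n+1) := by
    rw [hρ]
    have h1 : min (min r0 r1) (min (dist p0 p1 / 2) ((1/2:ℝ)^(n+2))) ≤ (1/2:ℝ)^(n+2) :=
      le_trans (min_le_right _ _) (min_le_right _ _)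
    have h2 : (1/2:ℝ)^(n+2) ≤ (1/2:ℝ)^(n+1) := by
      rw [pow_succ]
      have h3 : (0:ℝ) < (1/2:ℝ)^(n+1) := by positivity
      nlinarith
    linarith
  have hdiam : ∀ (p : X), ∀ z ∈ Metric.closedBall p ρ, ∀ w ∈ Metric.closedBall p ρ,
      edist z w ≤ (2:ℝ≥0∞)⁻¹ ^ (n+1) := by
    intro p z hz w hw
    refine edist_le_pow_of_dist ?_
    rw [Metric.mem_closedBall] at hz hw
    calc dist z w ≤ dist z p + dist p w := dist_triangle _ _ _
    _ ≤ ρ + ρ := add_le_add hz (by rwa [dist_comm] at hw)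
    _ = 2*ρ := by ring
    _ ≤ (1/2:ℝ)^(n+1) := hρdiam
  refine ⟨Metric.closedBall p0 ρ, Metric.closedBall p1 ρ,
    W0' ∩ Metric.ball p0 ρ, W1' ∩ Metric.ball p1 ρ, δ,
    Metric.isClosed_closedBall, Metric.isClosed_closedBall,
    subset_trans (Metric.closedBall_subset_ball hρr0) hr0h,
    subset_trans (Metric.closedBall_subset_ball hρr1) hr1h,
    ?_, hdiam p0, hdiam p1,
    subset_trans Set.inter_subset_right Metric.ball_subset_interior_closedBall,
    subset_trans Set.inter_subset_right Metric.ball_subset_interior_closedBall,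
    subset_trans Set.inter_subset_left hW0sub,
    subset_trans Set.inter_subset_left hW1sub,
    hp0cond ρ hρpos, hp1cond ρ hρpos, hδpos, hδone,
    fun x hx y hy => hcross x hx.1 y hy.1⟩
  -- disjointness of the two balls
  rw [Set.disjoint_left]
  intro z hz0 hz1
  rw [Metric.mem_closedBall] at hz0 hz1
  have : dist p0 p1 ≤ dist p0 z + dist z p1 := dist_triangle _ _ _
  rw [dist_comm p0 z] at this
  linarith

lemma fin_neq_cases {n : ℕ} {v w : Fin (n+1) → Bool} (h : v ≠ w) :
    (v ∘ Fin.castSucc ≠ w ∘ Fin.castSucc) ∨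
    (v ∘ Fin.castSucc = w ∘ Fin.castSucc ∧ v (Fin.last n) ≠ w (Fin.last n)) := by
  by_cases hp : v ∘ Fin.castSucc = w ∘ Fin.castSucc
  · right
    refine ⟨hp, fun hl => h ?_⟩
    funext i
    refine Fin.lastCases ?_ ?_ i
    · exact hl
    · intro j; exact congrFun hp j
  · left; exact hp

lemma step_good (hc : ℵ₀ ≤ c) {D : Set X} (hD : Dense D) (hDc : Cardinal.mk D ≤ c)
    (hf : Continuous f) (hY : Scrambled f Y) {n : ℕ} {C : Conf X n}
    (hC : Pre f Y c n C) :
    ∃ C' : Conf X (n+1), Good f Y c (n+1) C' ∧ ConfExt C C' := by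
  classical
  have H : ∀ v : Fin n → Bool, ∃ B0 B1 W0 W1 : Set X, ∃ δp : ℝ≥0∞,
      SD f c n (C.B v) (C.W v) B0 B1 W0 W1 δp :=
    fun v => split_cell hc hD hDc hY (hC.WB v) (hC.WY v) (hC.Wbig v)
  choose B0 B1 W0 W1 δp hSD using H
  set pre : (Fin (n+1) → Bool) → (Fin n → Bool) := fun v => v ∘ Fin.castSucc with hpre
  set Cmid : Conf X (n+1) := ⟨
    fun v => if v (Fin.last n) = true then B1 (pre v) else B0 (pre v),
    fun v => if v (Fin.last n) = true then W1 (pre v) else W0 (pre v),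
    fun v w => if pre v = pre w then δp (pre v) else C.δ (pre v) (pre w)⟩ with hCmid
  have hBm : ∀ v, Cmid.B v ⊆ C.B (pre v) := by
    intro v
    by_cases hb : v (Fin.last n) = true
    · simp only [hCmid, if_pos hb]; exact (hSD (pre v)).sub1
    · simp only [hCmid, if_neg hb]; exact (hSD (pre v)).sub0
  have hWm : ∀ v, Cmid.W v ⊆ C.W (pre v) := by
    intro v
    by_cases hb : v (Fin.last n) = true
    · simp only [hCmid, if_pos hb]; exact (hSD (pre v)).wsub1
    · simp only [hCmid, if_neg hb]; exact (hSD (pre v)).wsub0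
  have hPre : Pre f Y c (n+1) Cmid := by
    constructor
    · intro v
      by_cases hb : v (Fin.last n) = true
      · simp only [hCmid, if_pos hb]; exact (hSD (pre v)).closed1
      · simp only [hCmid, if_neg hb]; exact (hSD (pre v)).closed0
    · intro v
      by_cases hb : v (Fin.last n) = true
      · simp only [hCmid, if_pos hb]; exact (hSD (pre v)).diam1
      · simp only [hCmid, if_neg hb]; exact (hSD (pre v)).diam0
    · intro v
      by_cases hb : v (Fin.last n) = true
      · simp only [hCmid, if_pos hb]; exact (hSD (pre v)).wint1
      · simp only [hCmid, if_neg hb]; exact (hSD (pre v)).wint0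
    · intro v
      by_cases hb : v (Fin.last n) = true
      · simp only [hCmid, if_pos hb]
        exact subset_trans (hSD (pre v)).wsub1 (hC.WY (pre v))
      · simp only [hCmid, if_neg hb]
        exact subset_trans (hSD (pre v)).wsub0 (hC.WY (pre v))
    · intro v
      by_cases hb : v (Fin.last n) = true
      · simp only [hCmid, if_pos hb]; exact (hSD (pre v)).wbig1
      · simp only [hCmid, if_neg hb]; exact (hSD (pre v)).wbig0
    · -- disjointness
      intro v w hvw
      rcases fin_neq_cases hvw with hp | ⟨hp, hl⟩
      · exact Set.disjoint_of_subset (hBm v) (hBm w) (hC.disj (pre v) (pre w) hp)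
      · have hp2 : pre v = pre w := hp
        by_cases hbv : v (Fin.last n) = true
        · have hbw : ¬ (w (Fin.last n) = true) := fun hw => hl (by rw [hbv, hw])
          simp only [hCmid, if_pos hbv, if_neg hbw]
          rw [hp2]
          exact ((hSD (pre w)).dsj).symm
        · have hbw : w (Fin.last n) = true := by
            rcases Bool.eq_false_or_eq_true (w (Fin.last n)) with h | h
            · exact h
            · exfalso
              apply hl
              rw [Bool.not_eq_true] at hbv
              rw [hbv, h]
          simp only [hCmid, if_neg hbv, if_pos hbw]
          rw [hp2]
          exact (hSD (pre w)).dsj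
    · -- δpos
      intro v w hvw
      by_cases hp : pre v = pre w
      · simp only [hCmid, if_pos hp]; exact (hSD (pre v)).dpos
      · simp only [hCmid, if_neg hp]; exact hC.δpos (pre v) (pre w) hp
    · -- δone
      intro v w
      by_cases hp : pre v = pre w
      · simp only [hCmid, if_pos hp]; exact (hSD (pre v)).done'
      · simp only [hCmid, if_neg hp]; exact hC.δone (pre v) (pre w)
    · -- cross
      intro v w hvw x hx y hy
      rcases fin_neq_cases hvw with hp | ⟨hp, hl⟩
      · simp only [hCmid, if_neg (show ¬ pre v = pre w from hp)]
        exact hC.cross (pre v) (pre w) hp x (hWm v hx) y (hWm w hy)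
      · have hp2 : pre v = pre w := hp
        simp only [hCmid, if_pos hp2, hp2]
        by_cases hbv : v (Fin.last n) = true
        · have hbw : ¬ (w (Fin.last n) = true) := fun hw => hl (by rw [hbv, hw])
          simp only [hCmid, if_pos hbv] at hx
          simp only [hCmid, if_neg hbw] at hy
          rw [hp2] at hx
          rw [LS_comm]
          exact (hSD (pre w)).crossLS y hy x hx
        · have hbw : w (Fin.last n) = true := by
            rcases Bool.eq_false_or_eq_true (w (Fin.last n)) with h | h
            · exact h
            · exfalso
              apply hl
              rw [Bool.not_eq_true] at hbv
              rw [hbv, h]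
          simp only [hCmid, if_neg hbv] at hx
          simp only [hCmid, if_pos hbw] at hy
          rw [hp2] at hx
          exact (hSD (pre w)).crossLS x hx y hy
  have hExtMid : ConfExt C Cmid := by
    refine ⟨hBm, hWm, ?_⟩
    intro v w hp
    exact if_neg hp
  obtain ⟨C', hC', hδ', hB', hW', hT⟩ := refine_list hc hD hDc hf hY hPre
    (Finset.univ.toList (α := (Fin (n+1) → Bool) × (Fin (n+1) → Bool)))
  refine ⟨C', ⟨hC', ?_, ?_⟩, ?_, ?_, ?_⟩
  · intro v w hvw
    exact (hT (v, w) (by simp) hvw).1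
  · intro v w hvw
    obtain ⟨m, hm, hcert⟩ := (hT (v, w) (by simp) hvw).2
    refine ⟨m, hm, ?_⟩
    rwa [← hδ'] at hcert
  · exact fun v => (hB' v).trans (hBm v)
  · exact fun v => (hW' v).trans (hWm v)
  · intro v w hp
    rw [hδ']
    exact if_neg hp

lemma base_good (hc : ℵ₀ ≤ c) {D : Set X} (hD : Dense D) (hDc : Cardinal.mk D ≤ c)
    (hY : Scrambled f Y) (hYbig : c < Cardinal.mk Y) :
    ∃ C : Conf X 0, Good f Y c 0 C := by
  obtain ⟨x₀, hx₀Y, hx₀cond⟩ := exists_condensation_point hc hD hDc hYbig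
  have hsing : ∀ v w : Fin 0 → Bool, v = w := fun v w => funext fun i => i.elim0
  refine ⟨⟨fun _ => Metric.closedBall x₀ (1/4), fun _ => Y ∩ Metric.ball x₀ (1/4),
    fun _ _ => 1⟩, ⟨?_, ?_, ?_, ?_, ?_, ?_, ?_, ?_, ?_⟩, ?_, ?_⟩
  · intro v; exact Metric.isClosed_closedBall
  · intro v z hz w hw
    have h1 : dist z w ≤ (1/2:ℝ) := by
      rw [Metric.mem_closedBall] at hz hw
      have := dist_triangle z x₀ w
      rw [dist_comm x₀ w] at this
      linarith
    have h2 := edist_le_pow_of_dist (z := z) (w := w) (k := 0) (by rw [pow_zero]; linarith)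
    simpa using h2
  · intro v
    exact subset_trans Set.inter_subset_right Metric.ball_subset_interior_closedBall
  · intro v; exact Set.inter_subset_left
  · intro v; exact hx₀cond (1/4) (by norm_num)
  · intro v w hvw; exact absurd (hsing v w) hvw
  · intro v w hvw; exact absurd (hsing v w) hvw
  · intro v w; exact le_rfl
  · intro v w hvw; exact absurd (hsing v w) hvw
  · intro v w hvw; exact absurd (hsing v w) hvw
  · intro v w hvw; exact absurd (hsing v w) hvw

theorem main_theorem [CompleteSpace X] (hc : ℵ₀ ≤ c) {D : Set X} (hD : Dense D)
    (hDc : Cardinal.mk D ≤ c) (hf : Continuous f) (hY : Scrambled f Y)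
    (hYbig : c < Cardinal.mk Y) :
    ∃ C : Set X, Nonempty ((ℕ → Bool) ≃ₜ C) ∧ Scrambled f C := by
  classical
  obtain ⟨C0, hC0⟩ := base_good hc hD hDc hY hYbig
  let Fc : ∀ n, {C : Conf X n // Good f Y c n C} := fun n => Nat.rec ⟨C0, hC0⟩
    (fun k p => ⟨(step_good hc hD hDc hf hY p.2.toPre).choose,
      (step_good hc hD hDc hf hY p.2.toPre).choose_spec.1⟩) n
  set g : ∀ n, Conf X n := fun n => (Fc n).1 with hgdef
  have hg : ∀ n, Good f Y c n (g n) := fun n => (Fc n).2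
  have hFext : ∀ n, ConfExt (g n) (g (n+1)) :=
    fun n => (step_good hc hD hDc hf hY (Fc n).2.toPre).choose_spec.2
  set res : (ℕ → Bool) → ∀ n : ℕ, Fin n → Bool := fun σ n i => σ i with hresdef
  have hres : ∀ σ n, (res σ (n+1)) ∘ Fin.castSucc = res σ n := fun σ n => rfl
  have hBnest : ∀ σ n, (g (n+1)).B (res σ (n+1)) ⊆ (g n).B (res σ n) := by
    intro σ n
    have h := (hFext n).1 (res σ (n+1))
    rwa [hres σ n] at h
  have hmono : ∀ (σ : ℕ → Bool) (m n : ℕ), m ≤ n →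
      (g n).B (res σ n) ⊆ (g m).B (res σ m) := by
    intro σ m n hmn
    induction n, hmn using Nat.le_induction with
    | base => exact subset_rfl
    | succ n hmn ih => exact subset_trans (hBnest σ n) ih
  have hex : ∀ (σ : ℕ → Bool) (n : ℕ), ∃ x, x ∈ (g n).W (res σ n) :=
    fun σ n => big_nonempty ((hg n).Wbig (res σ n))
  choose xc hxc using hex
  have hxB : ∀ σ n, xc σ n ∈ (g n).B (res σ n) :=
    fun σ n => interior_subset ((hg n).WB (res σ n) (hxc σ n))
  have hcauchy : ∀ σ, CauchySeq (fun n => xc σ n) := by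
    intro σ
    refine cauchySeq_of_edist_le_geometric (2:ℝ≥0∞)⁻¹ 1 (by simp [ENNReal.inv_lt_one]) one_ne_top
      (fun n => ?_)
    rw [one_mul]
    exact (hg n).diam (res σ n) _ (hxB σ n) _ (hBnest σ n (hxB σ (n+1)))
  choose φ hφ using fun σ => cauchySeq_tendsto_of_complete (hcauchy σ)
  have hφB : ∀ σ n, φ σ ∈ (g n).B (res σ n) := by
    intro σ n
    refine ((hg n).closed (res σ n)).mem_of_tendsto (hφ σ) ?_
    rw [Filter.eventually_atTop]
    exact ⟨n, fun m hm => hmono σ n m hm (hxB σ m)⟩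
  have hedist : ∀ σ τ n, res σ n = res τ n → edist (φ σ) (φ τ) ≤ (2:ℝ≥0∞)⁻¹ ^ n :=
    fun σ τ n h => (hg n).diam (res σ n) _ (hφB σ n) _ (h ▸ hφB τ n)
  have hrneq : ∀ (σ τ : ℕ → Bool) (i : ℕ), σ i ≠ τ i → ∀ n, i+1 ≤ n →
      res σ n ≠ res τ n := by
    intro σ τ i hi n hn h
    exact hi (congrFun h ⟨i, by omega⟩)
  have hinj : Function.Injective φ := by
    intro σ τ h
    by_contra hne
    obtain ⟨i, hi⟩ := Function.ne_iff.mp hne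
    have hd := (hg (i+1)).disj _ _ (hrneq σ τ i hi (i+1) le_rfl)
    exact Set.disjoint_left.mp hd (hφB σ (i+1)) (h ▸ hφB τ (i+1))
  have hcont : Continuous φ := by
    rw [continuous_iff_continuousAt]
    intro σ
    refine EMetric.tendsto_nhds.mpr ?_
    intro ε hε
    obtain ⟨k, hk⟩ := ENNReal.exists_inv_two_pow_lt hε.ne'
    have hSopen : IsOpen {τ : ℕ → Bool | ∀ i : Fin k, τ (i:ℕ) = σ (i:ℕ)} := by
      have : {τ : ℕ → Bool | ∀ i : Fin k, τ (i:ℕ) = σ (i:ℕ)} =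
          ⋂ i : Fin k, (fun τ : ℕ → Bool => τ (i:ℕ)) ⁻¹' {σ (i:ℕ)} := by
        ext τ; simp [Set.mem_iInter]
      rw [this]
      exact isOpen_iInter_of_finite fun i =>
        (continuous_apply ((i : Fin k) : ℕ)).isOpen_preimage _ (isOpen_discrete _)
    have hmem : σ ∈ {τ : ℕ → Bool | ∀ i : Fin k, τ (i:ℕ) = σ (i:ℕ)} := fun i => rfl
    refine Filter.eventually_of_mem (hSopen.mem_nhds hmem) ?_
    intro τ hτ
    have hres' : res τ k = res σ k := funext fun i => hτ i
    calc edist (φ τ) (φ σ) ≤ (2:ℝ≥0∞)⁻¹ ^ k := hedist τ σ k hres'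
    _ < ε := hk
  have hscr : Scrambled f (Set.range φ) := by
    rintro x ⟨σ, rfl⟩ y ⟨τ, rfl⟩ hxy
    have hστ : σ ≠ τ := fun h => hxy (by rw [h])
    obtain ⟨i, hi⟩ := Function.ne_iff.mp hστ
    constructor
    · -- Proximal
      show Filter.liminf (fun m => edist (f^[m] (φ σ)) (f^[m] (φ τ))) Filter.atTop = 0
      have hbnd : ∀ k : ℕ, Filter.liminf
          (fun m => edist (f^[m] (φ σ)) (f^[m] (φ τ))) Filter.atTop ≤ ((k:ℕ) : ℝ≥0∞)⁻¹ := by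
        intro k
        refine liminf_le_of_frequently_le ?_ (by isBoundedDefault)
        rw [Filter.frequently_atTop]
        intro N
        set n := max (max N k) (i+1) with hn
        obtain ⟨m, hm, hcert⟩ := (hg n).certP _ _ (hrneq σ τ i hi n (le_max_right _ _))
        refine ⟨m, le_trans (le_trans (le_max_left N k) (le_max_left _ _)) hm, ?_⟩
        refine le_trans (hcert _ (hφB σ n) _ (hφB τ n)) ?_
        exact ENNReal.inv_le_inv' (Nat.cast_le.mpr (le_trans (le_max_right N k) (le_max_left _ _)))
      by_contra hne0
      obtain ⟨k, hk⟩ := ENNReal.exists_inv_nat_lt hne0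
      exact absurd (lt_of_lt_of_le hk (hbnd k)) (lt_irrefl _)
    · -- not Asymptotic
      set δs : ℝ≥0∞ := (g (i+1)).δ (res σ (i+1)) (res τ (i+1)) with hδs
      have hδpos : 0 < δs := (hg (i+1)).δpos _ _ (hrneq σ τ i hi (i+1) le_rfl)
      have hconst : ∀ n, i+1 ≤ n → (g n).δ (res σ n) (res τ n) = δs := by
        intro n hn
        induction n, hn using Nat.le_induction with
        | base => rfl
        | succ n hn ih =>
          have h := (hFext n).2.2 (res σ (n+1)) (res τ (n+1))
            (by rw [hres σ n, hres τ n]; exact hrneq σ τ i hi n hn)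
          rw [hres σ n, hres τ n] at h
          rw [h, ih]
      have hfreq : ∃ᶠ m in Filter.atTop,
          δs/4 ≤ edist (f^[m] (φ σ)) (f^[m] (φ τ)) := by
        rw [Filter.frequently_atTop]
        intro N
        set n := max N (i+1) with hn
        obtain ⟨m, hm, hcert⟩ := (hg n).certS _ _ (hrneq σ τ i hi n (le_max_right _ _))
        refine ⟨m, le_trans (le_max_left N (i+1)) hm, ?_⟩
        have := hcert _ (hφB σ n) _ (hφB τ n)
        rwa [hconst n (le_max_right _ _)] at this
      intro hA
      have hlim := le_limsup_of_frequently_le hfreq (by isBoundedDefault)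
      rw [hA] at hlim
      have hq : (0:ℝ≥0∞) < δs/4 := ENNReal.div_pos hδpos.ne' (by norm_num : (4:ℝ≥0∞) ≠ ⊤)
      exact absurd (le_antisymm hlim zero_le) hq.ne'
  refine ⟨Set.range φ, ⟨?_⟩, hscr⟩
  exact Continuous.homeoOfEquivCompactToT2 (f := Equiv.ofInjective φ hinj)
    (Continuous.subtype_mk hcont _)


end

/-- A dynamical system on a complete metric space with a dense set of size `κ` and a
scrambled set of size `> κ` has a scrambled Cantor set. -/
theorem stmt_18 {X K : Type u} [MetricSpace X] [CompleteSpace X] [Infinite K]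
    (D : Set X) (hD : Dense D) (hDcard : Cardinal.mk D = Cardinal.mk K)
    (f : X → X) (hf : Continuous f)
    (Y : Set X) (hYcard : Cardinal.mk K < Cardinal.mk Y) (hY : Scrambled f Y) :
    ∃ C : Set X, Nonempty ((ℕ → Bool) ≃ₜ C) ∧ Scrambled f C := by
  have hc : Cardinal.aleph0 ≤ Cardinal.mk K := Cardinal.infinite_iff.mp ‹Infinite K›
  exact main_theorem (c := Cardinal.mk K) hc hD (le_of_eq hDcard) hf hY hYcard
end
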